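/- Let h(y) = βy, λ(y) = 1/(c + y·0) = 1/c (case r = 1), with β, c, δ > 0, so y₀ = -cδ/β and y_∞ = -c(β+δ)/β. Then the time-to-liquidation function τ(y) = -y/(δc) - 1/β - (1/δ) log(y/c + 1 + δ/β) satisfies: τ(y₀) = 0, τ is strictly decreasing on (y_∞, y₀], and τ(y) → +∞ as y ↘ y_∞. -/

import Mathlib

open Real Filter

/-- Example 4.4 with `r = 1`: the time-to-liquidation
`τ(y) = -y/(δc) - 1/β - (1/δ) log(y/c + 1 + δ/β)` vanishes at `y₀ = -cδ/β`,
is strictly decreasing on `(y_∞, y₀]` with `y_∞ = -c(β+δ)/β`, and tends to `+∞`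
as `y ↘ y_∞`. -/
theorem stmt15 (β c δ : ℝ) (hβ : 0 < β) (hc : 0 < c) (hδ : 0 < δ)
    (τ : ℝ → ℝ)
    (hτ : ∀ y, τ y = -y / (δ * c) - 1 / β - (1 / δ) * Real.log (y / c + 1 + δ / β)) :
    let y₀ := -c * δ / β
    let yInf := -c * (β + δ) / β
    τ y₀ = 0 ∧
    StrictAntiOn τ (Set.Ioc yInf y₀) ∧
    Tendsto τ (nhdsWithin yInf (Set.Ioi yInf)) atTop := by
  intro y₀ yInf
  have hcβ : (0:ℝ) < c * β := mul_pos hc hβ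
  have key : ∀ y : ℝ, yInf < y → 0 < y / c + 1 + δ / β := by
    intro y hy
    have h1 : -c * (β + δ) / β < y := hy
    have h2 : -c * (β + δ) < y * β := by
      rw [div_lt_iff₀ hβ] at h1; linarith
    have h3 : y / c + 1 + δ / β = (y * β + c * β + c * δ) / (c * β) := by
      field_simp
    rw [h3]
    exact div_pos (by nlinarith) hcβ
  refine ⟨?_, ?_, ?_⟩
  · rw [hτ]
    have h4 : (-c * δ / β) / c + 1 + δ / β = 1 := by field_simp; ring
    rw [show y₀ = -c * δ / β from rfl] at *
    rw [h4, Real.log_one]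
    field_simp
    ring
  · intro x hx y hy hxy
    rw [hτ, hτ]
    have hAx := key x hx.1
    have hlog : Real.log (x / c + 1 + δ / β) < Real.log (y / c + 1 + δ / β) := by
      apply Real.log_lt_log hAx
      gcongr
    have h5 : -y / (δ * c) < -x / (δ * c) := by
      have hδc : (0:ℝ) < δ * c := by positivity
      exact div_lt_div_of_pos_right (by linarith) hδc
    have h6 : (1 / δ) * Real.log (x / c + 1 + δ / β) < (1 / δ) * Real.log (y / c + 1 + δ / β) := by
      apply mul_lt_mul_of_pos_left hlog
      positivity
    linarith
  · have heq : τ = fun y => (-y / (δ * c) - 1 / β) + (-(1 / δ)) * Real.log (y / c + 1 + δ / β) := by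
      funext y; rw [hτ]; ring
    rw [heq]
    apply Tendsto.add_atTop (C := -yInf / (δ * c) - 1 / β)
    · apply Tendsto.sub _ tendsto_const_nhds
      exact (tendsto_nhdsWithin_of_tendsto_nhds (Tendsto.div_const (tendsto_id.neg) _))
    · have hA : Tendsto (fun y => y / c + 1 + δ / β) (nhdsWithin yInf (Set.Ioi yInf)) (nhdsWithin 0 (Set.Ioi 0)) := by
        rw [tendsto_nhdsWithin_iff]
        constructor
        · have h0 : yInf / c + 1 + δ / β = 0 := by
            show (-c * (β + δ) / β) / c + 1 + δ / β = 0
            field_simp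
            ring
          have : Tendsto (fun y : ℝ => y / c + 1 + δ / β) (nhds yInf) (nhds (yInf / c + 1 + δ / β)) := by
            apply Tendsto.add_const
            exact Tendsto.add_const _ (Tendsto.div_const tendsto_id _)
          rw [h0] at this
          exact this.mono_left nhdsWithin_le_nhds
        · filter_upwards [self_mem_nhdsWithin] with y hy
          exact key y hy
      have hlog : Tendsto (fun y => Real.log (y / c + 1 + δ / β)) (nhdsWithin yInf (Set.Ioi yInf)) atBot :=
        Real.tendsto_log_nhdsGT_zero.comp hA
      have : Tendsto (fun y => (-(1 / δ)) * Real.log (y / c + 1 + δ / β)) (nhdsWithin yInf (Set.Ioi yInf)) atTop := by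
        have hneg : Tendsto (fun y => -Real.log (y / c + 1 + δ / β)) (nhdsWithin yInf (Set.Ioi yInf)) atTop :=
          tendsto_neg_atBot_atTop.comp hlog
        have h7 : Tendsto (fun y => (1 / δ) * -Real.log (y / c + 1 + δ / β)) (nhdsWithin yInf (Set.Ioi yInf)) atTop :=
          Tendsto.const_mul_atTop (by positivity) hneg
        refine h7.congr (fun y => by ring)
      exact this
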